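/- Let I = [-1,1], γ > 0, and ε > 0 small, and set ξ₀(r) = s'(r/ε) where s(z) = ½(1 + tanh(γz/2)). Then |ξ₀(±1)·ξ₀'(±1)| ≤ γ³ e^{-2γ/ε}/ε, and ∫₀¹ ξ₀(r)^{-2} dr = (ε e^{2γ/ε}/(2γ³))·(1 + O(e^{-γ/ε})) as ε → 0. -/

import Mathlib

/-- The standard transition profile `s(z) = (1 + tanh(γ z / 2)) / 2`. -/
noncomputable def sProfile (γ z : ℝ) : ℝ := (1 + Real.tanh (γ * z / 2)) / 2

/-- The rescaled derivative profile `ξ₀(r) = s'(r/ε)`. -/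
noncomputable def xiZero (γ ε r : ℝ) : ℝ := deriv (sProfile γ) (r / ε)

lemma myTanh (x : ℝ) : HasDerivAt Real.tanh (1 / Real.cosh x ^ 2) x := by
  have h : HasDerivAt (fun y => Real.sinh y / Real.cosh y)
      ((Real.cosh x * Real.cosh x - Real.sinh x * Real.sinh x) / Real.cosh x ^ 2) x :=
    (Real.hasDerivAt_sinh x).div (Real.hasDerivAt_cosh x) (Real.cosh_pos x).ne'
  have ht : Real.tanh = fun y => Real.sinh y / Real.cosh y :=
    funext fun y => Real.tanh_eq_sinh_div_cosh y
  rw [ht]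
  convert h using 2
  nlinarith [Real.cosh_sq_sub_sinh_sq x]

lemma sDeriv (γ z : ℝ) : HasDerivAt (sProfile γ) (γ / (4 * Real.cosh (γ * z / 2) ^ 2)) z := by
  have hin : HasDerivAt (fun z : ℝ => γ * z / 2) (γ * 1 / 2) z :=
    ((hasDerivAt_id z).const_mul γ).div_const 2
  have h := (((myTanh (γ * z / 2)).comp z hin).const_add 1).div_const 2
  refine h.congr_deriv ?_
  rw [mul_one]
  ring

lemma xiZero_eq (γ ε : ℝ) (r : ℝ) : xiZero γ ε r = γ / (4 * Real.cosh (γ * r / (2 * ε)) ^ 2) := by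
  unfold xiZero
  rw [(sDeriv γ (r / ε)).deriv, show γ * (r / ε) / 2 = γ * r / (2 * ε) by ring]

lemma xiDeriv (γ ε : ℝ) (hε : ε ≠ 0) (r : ℝ) :
    HasDerivAt (xiZero γ ε)
      (-(γ ^ 2 * Real.sinh (γ * r / (2 * ε))) / (4 * ε * Real.cosh (γ * r / (2 * ε)) ^ 3)) r := by
  have hfun : xiZero γ ε = fun r => γ / (4 * Real.cosh (γ * r / (2 * ε)) ^ 2) :=
    funext fun r => xiZero_eq γ ε r
  rw [hfun]
  have hin : HasDerivAt (fun r : ℝ => γ * r / (2 * ε)) (γ * 1 / (2 * ε)) r :=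
    ((hasDerivAt_id r).const_mul γ).div_const (2 * ε)
  have hden := ((hin.cosh.pow 2).const_mul (4 : ℝ))
  have h := (hasDerivAt_const r γ).div hden (by
    exact mul_ne_zero four_ne_zero (pow_ne_zero 2 (Real.cosh_pos _).ne'))
  refine h.congr_deriv ?_
  have hc := (Real.cosh_pos (γ * r / (2 * ε))).ne'
  simp only [Pi.pow_apply]
  field_simp
  ring

lemma bdBound (γ ε : ℝ) (hγ : 0 < γ) (hε : 0 < ε) (r : ℝ) (hr : |r| = 1) :
    |xiZero γ ε r * deriv (xiZero γ ε) r| ≤ γ ^ 3 * Real.exp (-2 * γ / ε) / ε := by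
  set u := γ * r / (2 * ε) with hu
  have hud : |u| = γ / (2 * ε) := by
    rw [hu, abs_div, abs_mul, hr, abs_of_pos hγ, abs_of_pos (by linarith : (0:ℝ) < 2 * ε)]
    ring
  have hx := xiZero_eq γ ε r
  have hd := (xiDeriv γ ε hε.ne' r).deriv
  have hcp := Real.cosh_pos u
  have hprod : xiZero γ ε r * deriv (xiZero γ ε) r
      = -(γ ^ 3 * Real.sinh u) / (16 * ε * Real.cosh u ^ 5) := by
    rw [hx, hd]
    field_simp
    ring
  have h1 : |Real.sinh u| ≤ Real.cosh u := by
    rw [Real.abs_sinh, ← Real.cosh_abs, Real.sinh_eq, Real.cosh_eq]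
    have := (Real.exp_pos (-|u|)).le
    linarith
  have h2 : Real.exp (γ / (2 * ε)) / 2 ≤ Real.cosh u := by
    rw [← Real.cosh_abs, hud, Real.cosh_eq]
    have := (Real.exp_pos (-(γ / (2 * ε)))).le
    linarith
  have hE4 : Real.exp (γ / (2 * ε)) ^ 4 = Real.exp (2 * γ / ε) := by
    rw [← Real.exp_nat_mul]
    congr 1
    push_cast
    field_simp
    ring
  have key : 1 ≤ Real.exp (-2 * γ / ε) * (16 * Real.cosh u ^ 4) := by
    have hpow : Real.exp (γ / (2 * ε)) ^ 4 ≤ (2 * Real.cosh u) ^ 4 :=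
      pow_le_pow_left₀ (Real.exp_pos _).le (by linarith) 4
    have h16 : (2 * Real.cosh u) ^ 4 = 16 * Real.cosh u ^ 4 := by ring
    have hmul : Real.exp (-2 * γ / ε) * Real.exp (2 * γ / ε) = 1 := by
      rw [← Real.exp_add, show -2 * γ / ε + 2 * γ / ε = 0 by ring, Real.exp_zero]
    calc (1:ℝ) = Real.exp (-2 * γ / ε) * Real.exp (2 * γ / ε) := hmul.symm
      _ ≤ Real.exp (-2 * γ / ε) * (16 * Real.cosh u ^ 4) := by
          apply mul_le_mul_of_nonneg_left _ (Real.exp_pos _).le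
          rw [← hE4, ← h16]; exact hpow
  rw [hprod, abs_div, abs_neg, abs_mul, abs_of_pos (by positivity : (0:ℝ) < γ ^ 3),
    abs_of_pos (by positivity : (0:ℝ) < 16 * ε * Real.cosh u ^ 5)]
  rw [div_le_div_iff₀ (by positivity) hε]
  nlinarith [mul_le_mul_of_nonneg_left key (by positivity : (0:ℝ) ≤ γ ^ 3 * Real.cosh u * ε),
    mul_le_mul_of_nonneg_right h1 (by positivity : (0:ℝ) ≤ γ ^ 3 * ε),
    mul_pos hcp hε]

lemma integral_eval (γ ε : ℝ) (hγ : 0 < γ) (hε : 0 < ε) :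
    ∫ r in (0:ℝ)..1, ((xiZero γ ε r) ^ 2)⁻¹
      = (16 / γ ^ 2) * (3 / 8 + Real.sinh (γ / ε) * (ε / (2 * γ))
          + Real.sinh (2 * γ / ε) * (ε / (16 * γ))) := by
  have hcong : ∀ r : ℝ, ((xiZero γ ε r) ^ 2)⁻¹ = 16 * Real.cosh (γ * r / (2 * ε)) ^ 4 / γ ^ 2 := by
    intro r
    rw [xiZero_eq γ ε r]
    have hc := (Real.cosh_pos (γ * r / (2 * ε))).ne'
    field_simp
    ring
  rw [intervalIntegral.integral_congr (g := fun r => 16 * Real.cosh (γ * r / (2 * ε)) ^ 4 / γ ^ 2)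
    (fun r _ => hcong r)]
  set F : ℝ → ℝ := fun r => (16 / γ ^ 2) * (3 * r / 8 + Real.sinh (γ * r / ε) * (ε / (2 * γ))
      + Real.sinh (2 * γ * r / ε) * (ε / (16 * γ))) with hF
  have hid : ∀ v : ℝ, Real.cosh v ^ 4 = 3/8 + Real.cosh (2*v)/2 + Real.cosh (2*(2*v))/8 := by
    intro v
    nlinarith [Real.cosh_two_mul v, Real.cosh_two_mul (2*v), Real.cosh_sq_sub_sinh_sq v,
      Real.cosh_sq_sub_sinh_sq (2*v)]
  have hder : ∀ r ∈ Set.uIcc (0:ℝ) 1,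
      HasDerivAt F (16 * Real.cosh (γ * r / (2 * ε)) ^ 4 / γ ^ 2) r := by
    intro r _
    have i1 : HasDerivAt (fun r : ℝ => γ * r / ε) (γ * 1 / ε) r :=
      ((hasDerivAt_id r).const_mul γ).div_const ε
    have i2 : HasDerivAt (fun r : ℝ => 2 * γ * r / ε) (2 * γ * 1 / ε) r :=
      ((hasDerivAt_id r).const_mul (2 * γ)).div_const ε
    have h := ((((hasDerivAt_id r).const_mul (3:ℝ)).div_const 8).add
      ((i1.sinh.mul_const (ε / (2 * γ))).add
        (i2.sinh.mul_const (ε / (16 * γ))))).const_mul (16 / γ ^ 2)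
    refine (h.congr_of_eventuallyEq (Filter.EventuallyEq.of_eq ?_)).congr_deriv ?_
    · funext y
      simp only [hF, id_eq, Pi.add_apply]
      ring
    · rw [show γ * r / ε = 2 * (γ * r / (2 * ε)) by ring,
        show 2 * γ * r / ε = 2 * (2 * (γ * r / (2 * ε))) by ring, hid]
      field_simp
      ring
  have hint : IntervalIntegrable (fun r => 16 * Real.cosh (γ * r / (2 * ε)) ^ 4 / γ ^ 2)
      MeasureTheory.volume 0 1 := by
    apply Continuous.intervalIntegrable
    fun_prop
  rw [intervalIntegral.integral_eq_sub_of_hasDerivAt hder hint]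
  simp only [hF]
  norm_num [Real.sinh_zero]

set_option maxHeartbeats 1000000 in
theorem stmt15 (γ : ℝ) (hγ : 0 < γ) :
    ∃ C > (0 : ℝ), ∃ ε₀ > (0 : ℝ), ∀ ε : ℝ, 0 < ε → ε < ε₀ →
      |xiZero γ ε 1 * deriv (xiZero γ ε) 1| ≤ γ ^ 3 * Real.exp (-2 * γ / ε) / ε ∧
      |xiZero γ ε (-1) * deriv (xiZero γ ε) (-1)| ≤ γ ^ 3 * Real.exp (-2 * γ / ε) / ε ∧
      |(∫ r in (0 : ℝ)..1, ((xiZero γ ε r) ^ 2)⁻¹) -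
          ε * Real.exp (2 * γ / ε) / (2 * γ ^ 3)| ≤
        C * (ε * Real.exp (2 * γ / ε) / (2 * γ ^ 3)) * Real.exp (-γ / ε) := by
  refine ⟨29, by norm_num, 1, one_pos, fun ε hε hε1 => ?_⟩
  refine ⟨bdBound γ ε hγ hε 1 (by simp), bdBound γ ε hγ hε (-1) (by simp), ?_⟩
  rw [integral_eval γ ε hγ hε]
  set P := Real.exp (γ / ε) with hPdef
  set Q := P⁻¹ with hQdef
  have hP : 0 < P := Real.exp_pos _
  have hQ : 0 < Q := by positivity
  have hPQ : P * Q = 1 := mul_inv_cancel₀ hP.ne'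
  have hP1 : γ / ε + 1 ≤ P := by
    rw [hPdef]
    exact Real.add_one_le_exp _
  have hγεP : γ ≤ ε * P := by
    have : γ / ε ≤ P := by linarith
    calc γ = ε * (γ / ε) := by field_simp
      _ ≤ ε * P := by nlinarith
  have hQ1 : Q ≤ 1 := by
    rw [hQdef]
    rw [inv_le_one_iff₀]
    right; linarith [div_pos hγ hε]
  have hP2 : Real.exp (2 * γ / ε) = P * P := by
    rw [show (2:ℝ) * γ / ε = γ / ε + γ / ε by ring, Real.exp_add]
  have hPn : Real.exp (-γ / ε) = Q := by
    rw [show -γ / ε = -(γ / ε) by ring, Real.exp_neg]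
  have hs1 : Real.sinh (γ / ε) = (P - Q) / 2 := by
    rw [Real.sinh_eq, Real.exp_neg]
  have hs2 : Real.sinh (2 * γ / ε) = (P * P - Q * Q) / 2 := by
    rw [Real.sinh_eq, Real.exp_neg, hP2, mul_inv]
  rw [hs1, hs2, hP2, hPn]
  have hE : (16 / γ ^ 2) * (3 / 8 + (P - Q) / 2 * (ε / (2 * γ))
        + (P * P - Q * Q) / 2 * (ε / (16 * γ))) - ε * (P * P) / (2 * γ ^ 3)
      = (12 * γ + 8 * ε * P - 8 * ε * Q - ε * Q ^ 2) / (2 * γ ^ 3) := by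
    field_simp
    ring
  have hPPQ : P * P * Q = P := by rw [mul_assoc, hPQ, mul_one]
  have hR : 29 * (ε * (P * P) / (2 * γ ^ 3)) * Q = 29 * ε * P / (2 * γ ^ 3) := by
    field_simp
    linear_combination (mul_inv_cancel₀ hP.ne' : P * P⁻¹ = 1)
  rw [hE, hR, abs_div, abs_of_pos (by positivity : (0:ℝ) < 2 * γ ^ 3),
    div_le_div_iff_of_pos_right (by positivity : (0:ℝ) < 2 * γ ^ 3)]
  have hq1 : ε * Q ≤ ε := by nlinarith
  have hq2 : ε * Q ^ 2 ≤ ε := by nlinarith [sq_nonneg Q]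
  rw [abs_le]
  constructor
  · nlinarith [mul_pos hε hQ, sq_nonneg Q, mul_pos hε hP]
  · nlinarith [mul_pos hε hP, mul_pos hε hQ]
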